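/- The partition Λ attached to the (r,s) numerical semigroup is self-conjugate: its Frobenius characteristics satisfy a_i = b_i for all i (equivalently, Λ equals its transpose partition). -/

import Mathlib

private lemma repZ_symm (r s : ℕ) (hr : 1 < r) (hrs : r < s) (hco : Nat.Coprime r s) (n : ℤ) :
    (∃ a b : ℤ, 0 ≤ a ∧ 0 ≤ b ∧ a * r + b * s = n) ↔
      ¬ (∃ a b : ℤ, 0 ≤ a ∧ 0 ≤ b ∧ a * r + b * s = (r : ℤ) * s - r - s - n) := by
  have hrZ : (1:ℤ) < r := by exact_mod_cast hr
  have hsZ : (r:ℤ) < s := by exact_mod_cast hrs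
  have hcoZ : IsCoprime (r : ℤ) (s : ℤ) := Nat.isCoprime_iff_coprime.mpr hco
  obtain ⟨u, v, huv⟩ := hcoZ
  have hnot : ¬ ((∃ a b : ℤ, 0 ≤ a ∧ 0 ≤ b ∧ a * r + b * s = n) ∧
      (∃ a b : ℤ, 0 ≤ a ∧ 0 ≤ b ∧ a * r + b * s = (r:ℤ)*s - r - s - n)) := by
    rintro ⟨⟨a₁, b₁, ha₁, hb₁, e₁⟩, ⟨a₂, b₂, ha₂, hb₂, e₂⟩⟩
    have hs_dvd : (s:ℤ) ∣ (a₁ + a₂ + 1) * r :=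
      ⟨r - (b₁ + b₂ + 1), by linear_combination e₁ + e₂⟩
    have hcosr : IsCoprime (s:ℤ) (r:ℤ) := ⟨v, u, by linarith⟩
    have hs_dvd' : (s:ℤ) ∣ (a₁ + a₂ + 1) := hcosr.dvd_of_dvd_mul_right hs_dvd
    have h1 : (s:ℤ) ≤ a₁ + a₂ + 1 := Int.le_of_dvd (by linarith) hs_dvd'
    have hr_dvd : (r:ℤ) ∣ (b₁ + b₂ + 1) * s :=
      ⟨s - (a₁ + a₂ + 1), by linear_combination e₁ + e₂⟩
    have hcors : IsCoprime (r:ℤ) (s:ℤ) := ⟨u, v, huv⟩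
    have hr_dvd' : (r:ℤ) ∣ (b₁ + b₂ + 1) := hcors.dvd_of_dvd_mul_right hr_dvd
    have h2 : (r:ℤ) ≤ b₁ + b₂ + 1 := Int.le_of_dvd (by linarith) hr_dvd'
    have heq : (a₁ + a₂ + 1) * r + (b₁ + b₂ + 1) * s = (r:ℤ) * s := by
      linear_combination e₁ + e₂
    nlinarith [mul_le_mul_of_nonneg_right h1 (by linarith : (0:ℤ) ≤ r),
      mul_le_mul_of_nonneg_right h2 (by linarith : (0:ℤ) ≤ s)]
  have hor : (∃ a b : ℤ, 0 ≤ a ∧ 0 ≤ b ∧ a * r + b * s = n) ∨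
      (∃ a b : ℤ, 0 ≤ a ∧ 0 ≤ b ∧ a * r + b * s = (r:ℤ)*s - r - s - n) := by
    set a : ℤ := (n * u) % s with ha
    have hs0 : (0:ℤ) < s := by linarith
    have ha0 : 0 ≤ a := Int.emod_nonneg _ (by linarith)
    have has : a < s := Int.emod_lt_of_pos _ hs0
    have hdvd : (s:ℤ) ∣ n - a * r := by
      have h1 : a = n * u - s * (n * u / s) := by rw [ha, Int.emod_def]
      refine ⟨n * v + (n * u / s) * r, ?_⟩
      rw [h1]
      linear_combination (-n) * huv
    obtain ⟨q, hq⟩ := hdvd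
    by_cases hb : 0 ≤ q
    · exact Or.inl ⟨a, q, ha0, hb, by linear_combination -hq⟩
    · exact Or.inr ⟨s - 1 - a, -1 - q, by linarith, by linarith, by linear_combination hq⟩
  constructor
  · intro h1 h2; exact hnot ⟨h1, h2⟩
  · intro h2; exact hor.resolve_right h2

theorem semigroup_partition_self_conjugate (r s : ℕ) (hr : 1 < r) (hrs : r < s)
    (hco : Nat.Coprime r s) (g : ℕ) (hg : g = (r - 1) * (s - 1) / 2)
    (N : ℕ → ℕ) (hN : N = Nat.nth (fun n => ∃ a b : ℕ, a * r + b * s = n))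
    (Λ : ℕ → ℤ) (hΛ : ∀ i : ℕ, Λ i = (g : ℤ) - (N (i - 1) : ℤ) + ((i : ℤ) - 1)) :
    ∀ j : ℕ, 1 ≤ j → j ≤ g →
      ((((Finset.Icc 1 g).filter (fun i => (j : ℤ) ≤ Λ i)).card : ℤ)) = Λ j := by
  classical
  set p : ℕ → Prop := fun n => ∃ a b : ℕ, a * r + b * s = n with hp
  -- basic facts
  have hp0 : p 0 := ⟨0, 0, by simp⟩
  have hpinf : (setOf p).Infinite :=
    Set.infinite_of_injective_forall_mem (f := fun n : ℕ => n * r)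
      (fun a b hab => Nat.eq_of_mul_eq_mul_right (by omega) hab)
      (fun n => ⟨n, 0, by simp⟩)
  -- 2*g = r*s - r - s + 1
  have h2dvd : ¬ (2 ∣ r ∧ 2 ∣ s) := by
    rintro ⟨h1, h2⟩
    have := Nat.dvd_gcd h1 h2
    rw [hco] at this
    omega
  have heven : 2 ∣ (r - 1) * (s - 1) := by
    rcases (by omega : 2 ∣ (r-1) ∨ 2 ∣ (s-1)) with h | h
    · exact Dvd.dvd.mul_right h _
    · exact Dvd.dvd.mul_left h _
  have h2g : 2 * g = r * s - r - s + 1 := by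
    rw [hg, Nat.mul_div_cancel' heven]
    have h3 : r + s ≤ r * s := by nlinarith
    zify [show 1 ≤ r from by omega, show 1 ≤ s from by omega,
      show r ≤ r * s from by nlinarith, show s ≤ r * s - r from by omega]
    ring
  have hg1 : 1 ≤ g := by nlinarith [h2g]
  -- symmetry over ℕ
  have hsym : ∀ m < 2 * g, (p m ↔ ¬ p (2 * g - 1 - m)) := by
    intro m hm
    have hzr : ∀ k : ℕ, (p k ↔ ∃ a b : ℤ, 0 ≤ a ∧ 0 ≤ b ∧ a * r + b * s = (k:ℤ)) := by
      intro k
      constructor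
      · rintro ⟨a, b, hab⟩
        exact ⟨a, b, by positivity, by positivity, by exact_mod_cast hab⟩
      · rintro ⟨a, b, ha, hb, hab⟩
        refine ⟨a.toNat, b.toNat, ?_⟩
        have h : ((a.toNat * r + b.toNat * s : ℕ) : ℤ) = (k : ℤ) := by
          push_cast [Int.toNat_of_nonneg ha, Int.toNat_of_nonneg hb]
          exact hab
        exact_mod_cast h
    rw [hzr m, hzr (2*g - 1 - m)]
    have hcast : ((2*g - 1 - m : ℕ) : ℤ) = (r : ℤ) * s - r - s - (m:ℤ) := by
      have h3 : r + s ≤ r * s := by nlinarith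
      have h4 : (2*g : ℤ) = (r:ℤ)*s - r - s + 1 := by
        have h5 := h2g
        zify [show r ≤ r * s from by nlinarith, show s ≤ r * s - r from by omega] at h5
        linarith
      omega
    rw [hcast]
    exact repZ_symm r s hr hrs hco (m:ℤ)
  -- count p (2g) = g
  have hfilneg : ∀ n : ℕ, ((Finset.range n).filter (fun k => ¬ p k)).card
      = n - Nat.count p n := by
    intro n
    have h0 := Finset.card_filter_add_card_filter_not (s := Finset.range n) p
    have h1 : Nat.count p n = ((Finset.range n).filter p).card := by
      rw [Nat.count_eq_card_filter_range]
    have h2 : (Finset.range n).card = n := Finset.card_range n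
    omega
  have hcount2g : Nat.count p (2 * g) = g := by
    have hb : ((Finset.range (2*g)).filter p).card
        = ((Finset.range (2*g)).filter (fun k => ¬ p k)).card := by
      apply Finset.card_nbij' (fun k => 2*g - 1 - k) (fun k => 2*g - 1 - k)
      · intro a ha
        simp only [Finset.mem_coe, Finset.mem_filter, Finset.mem_range] at *
        exact ⟨by omega, ((hsym a ha.1).mp ha.2 : ¬ p (2*g-1-a))⟩
      · intro a ha
        simp only [Finset.mem_coe, Finset.mem_filter, Finset.mem_range] at *
        refine ⟨by omega, (hsym (2*g-1-a) (by omega)).mpr ?_⟩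
        rw [show 2*g-1-(2*g-1-a) = a by omega]
        exact ha.2
      · intro a ha
        simp only [Finset.mem_coe, Finset.mem_filter, Finset.mem_range] at ha ⊢
        omega
      · intro a ha
        simp only [Finset.mem_coe, Finset.mem_filter, Finset.mem_range] at ha ⊢
        omega
    have h1 := hfilneg (2*g)
    have h3 : Nat.count p (2*g) = ((Finset.range (2*g)).filter p).card := by
      rw [Nat.count_eq_card_filter_range]
    omega
  -- gap identity
  have hgap : ∀ n ≤ 2*g, g + Nat.count p n = n + Nat.count p (2*g - n) := by
    intro n hn
    have h1 : Nat.count p (2*g) = Nat.count p (2*g - n)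
        + Nat.count (fun k => p ((2*g - n) + k)) n := by
      rw [← Nat.count_add]
      congr 1
      omega
    have h2 : Nat.count (fun k => p ((2*g-n) + k)) n = n - Nat.count p n := by
      rw [Nat.count_eq_card_filter_range, ← hfilneg n]
      apply Finset.card_nbij' (fun k => n - 1 - k) (fun k => n - 1 - k)
      · intro a ha
        simp only [Finset.mem_coe, Finset.mem_filter, Finset.mem_range] at *
        refine ⟨by omega, ?_⟩
        have := (hsym (2*g - n + a) (by omega)).mp ha.2
        rwa [show 2*g - 1 - (2*g - n + a) = n - 1 - a by omega] at this
      · intro a ha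
        simp only [Finset.mem_coe, Finset.mem_filter, Finset.mem_range] at *
        refine ⟨by omega, (hsym (2*g - n + (n - 1 - a)) (by omega)).mpr ?_⟩
        rw [show 2*g - 1 - (2*g - n + (n-1-a)) = a by omega]
        exact ha.2
      · intro a ha
        simp only [Finset.mem_coe, Finset.mem_filter, Finset.mem_range] at ha ⊢
        omega
      · intro a ha
        simp only [Finset.mem_coe, Finset.mem_filter, Finset.mem_range] at ha ⊢
        omega
    have hc := Nat.count_le (p := p) (n := n)
    omega
  -- facts about N
  have hNnth : ∀ k, N k = Nat.nth p k := by intro k; rw [hN]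
  have hcntN : ∀ k, Nat.count p (N k) = k := by
    intro k; rw [hNnth]; exact Nat.count_nth_of_infinite hpinf k
  have hkN : ∀ k, k ≤ N k := by
    intro k
    rw [hNnth]
    exact Nat.le_nth (fun hf => absurd hf hpinf)
  have hNlt : ∀ k < g, N k < 2 * g := by
    intro k hk
    rw [hNnth]
    exact (Nat.lt_nth_iff_count_lt hpinf).mp (by rw [hcount2g]; exact hk)
  -- the key symmetry of the partition
  have hkey : ∀ k l, k < g → l < g → (g + k ≤ l + N k ↔ 2*g ≤ N k + N l) := by
    intro k l hk hl
    have h1 := hgap (N k) (by have := hNlt k hk; omega)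
    rw [hcntN k] at h1
    have h2 : (Nat.count p (2*g - N k) ≤ l ↔ 2*g - N k ≤ Nat.nth p l) :=
      Nat.count_le_iff_le_nth hpinf
    rw [← hNnth] at h2
    have := hNlt k hk
    omega
  intro j hj1 hjg
  -- bounds on Λ j
  have hNj2g := hNlt (j-1) (by omega)
  have hgapj := hgap (N (j-1)) (by omega)
  rw [hcntN (j-1)] at hgapj
  have hub : N (j - 1) ≤ g + (j - 1) := by omega
  have hjN := hkN (j - 1)
  -- pointwise self-conjugacy
  have hiff : ∀ i, 1 ≤ i → i ≤ g → ((j:ℤ) ≤ Λ i ↔ (i:ℤ) ≤ Λ j) := by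
    intro i hi1 hig
    rw [hΛ i, hΛ j]
    have h1 := hkey (i-1) (j-1) (by omega) (by omega)
    have h2 := hkey (j-1) (i-1) (by omega) (by omega)
    have h3 := hkN (i-1)
    have h4 := hkN (j-1)
    omega
  have hfe : (Finset.Icc 1 g).filter (fun i => (j : ℤ) ≤ Λ i)
      = Finset.Icc 1 (g + (j-1) - N (j-1)) := by
    ext i
    simp only [Finset.mem_filter, Finset.mem_Icc]
    constructor
    · rintro ⟨⟨hi1, hig⟩, hle⟩
      rw [(hiff i hi1 hig), hΛ j] at hle
      omega
    · rintro ⟨hi1, hile⟩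
      have hig : i ≤ g := by omega
      refine ⟨⟨hi1, hig⟩, ?_⟩
      rw [hiff i hi1 hig, hΛ j]
      omega
  rw [hfe, Nat.card_Icc, hΛ j]
  have := hkN (j-1)
  omega
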